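/- arXiv:1503.04548 — 4 statements merged into one kernel-verified Lean document; each statement's English description precedes it below -/
import Mathlib

section
/- If the Mangasarian–Fromovitz constraint qualification holds at a feasible point x̄ of the system q_i(x)=0 for i∈E, q_i(x)≤0 for i∈I (with each q_i continuously differentiable), then there exists κ>0 such that ‖∇q(x̄)*λ‖ ≥ ‖λ‖/κ for all λ ∈ N_Θ(q(x̄)), where Θ = {0}^{l₁} × ℝ^{l₂}_- and N_Θ denotes the normal cone of convex analysis. -/
open Metric Set Filter Topology
open scoped RealInnerProductSpace NNReal

noncomputable section

abbrev En (n : ℕ) : Type := EuclideanSpace ℝ (Fin n)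

variable (n l₁ l₂ : ℕ) (q : Fin (l₁ + l₂) → En n → ℝ) (xb : En n) (φ : En n → ℝ)

/-- Feasibility for the constraint system `q i x = 0` (i ∈ E), `q i x ≤ 0` (i ∈ I). -/
def Feas (x : En n) : Prop :=
  ∀ i : Fin (l₁ + l₂), ((i : ℕ) < l₁ → q i x = 0) ∧ (l₁ ≤ (i : ℕ) → q i x ≤ 0)

/-- The feasible (constraint) set Γ. -/
def Gam : Set (En n) := {x | Feas n l₁ l₂ q x}

/-- The normal cone `N_Θ(q(x))` to `Θ = {0}^{l₁} × ℝ^{l₂}_-`, described coordinatewise. -/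
def NTheta (x : En n) : Set (En (l₁ + l₂)) :=
  {lam | ∀ i : Fin (l₁ + l₂), l₁ ≤ (i : ℕ) → 0 ≤ lam i ∧ (q i x ≠ 0 → lam i = 0)}

/-- `∇q(x)*λ = ∑ i λ_i ∇q_i(x)`, as a continuous linear functional. -/
def gradSum (x : En n) (lam : En (l₁ + l₂)) : En n →L[ℝ] ℝ :=
  ∑ i, lam i • fderiv ℝ (q i) x

/-- The set of Lagrange multipliers Λ(x, x*) (with x* represented as a functional ξ). -/
def LamSet (x : En n) (ξ : En n →L[ℝ] ℝ) : Set (En (l₁ + l₂)) :=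
  {lam | lam ∈ NTheta n l₁ l₂ q x ∧ gradSum n l₁ l₂ q x lam = ξ}

/-- The Hessian quadratic/bilinear form `⟨v, ∇²q_i(x) w⟩`. -/
def hessQ (i : Fin (l₁ + l₂)) (x v w : En n) : ℝ :=
  fderiv ℝ (fderiv ℝ (q i)) x v w

/-- `⟨v, ∇²⟨λ,q⟩(x) v⟩`. -/
def quadF (x v : En n) (lam : En (l₁ + l₂)) : ℝ :=
  ∑ i, lam i * hessQ n l₁ l₂ q i x v v

/-- The multiplier set in direction v: maximizers of `λ ↦ ⟨v, ∇²⟨λ,q⟩(x)v⟩` over Λ(x,ξ). -/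
def LamDir (x : En n) (ξ : En n →L[ℝ] ℝ) (v : En n) : Set (En (l₁ + l₂)) :=
  {lam | lam ∈ LamSet n l₁ l₂ q x ξ ∧
    ∀ μ ∈ LamSet n l₁ l₂ q x ξ, quadF n l₁ l₂ q x v μ ≤ quadF n l₁ l₂ q x v lam}

/-- The regular (Fréchet) normal cone to Γ at x, as the polar of the contingent cone. -/
def NhatF (x : En n) : Set (En n →L[ℝ] ℝ) :=
  {ξ | ∀ u ∈ tangentConeAt ℝ (Gam n l₁ l₂ q) x, ξ u ≤ 0}

/-- The limiting (Mordukhovich) normal cone to Γ at x. -/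
def Nlim (x : En n) : Set (En n →L[ℝ] ℝ) :=
  {ξ | ∃ xs : ℕ → En n, ∃ ξs : ℕ → (En n →L[ℝ] ℝ),
    (∀ k, xs k ∈ Gam n l₁ l₂ q ∧ ξs k ∈ NhatF n l₁ l₂ q (xs k)) ∧
    Tendsto xs atTop (𝓝 x) ∧ Tendsto ξs atTop (𝓝 ξ)}

/-- The critical cone `K(x, x*) = T_Γ(x) ∩ {x*}⊥`. -/
def Kcone (x : En n) (ξ : En n →L[ℝ] ℝ) : Set (En n) :=
  tangentConeAt ℝ (Gam n l₁ l₂ q) x ∩ {v | ξ v = 0}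

/-- MSCQ: metric subregularity of `x ↦ q(x) − Θ` at `(x̄, 0)`, in residual form. -/
def MSCQ : Prop :=
  ∃ κ > (0 : ℝ), ∃ U ∈ 𝓝 xb, ∀ x ∈ U,
    Metric.infDist x (Gam n l₁ l₂ q) ≤
      κ * ((∑ i ∈ Finset.univ.filter (fun i : Fin (l₁ + l₂) => (i : ℕ) < l₁), |q i x|) +
        ∑ i ∈ Finset.univ.filter (fun i : Fin (l₁ + l₂) => l₁ ≤ (i : ℕ)), max (q i x) 0)

/-- MFCQ at x̄. -/
def MFCQ : Prop :=
  LinearIndependent ℝ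
      (fun i : {i : Fin (l₁ + l₂) // (i : ℕ) < l₁} => fderiv ℝ (q i.1) xb) ∧
  ∃ u : En n, (∀ i : Fin (l₁ + l₂), (i : ℕ) < l₁ → fderiv ℝ (q i) xb u = 0) ∧
    (∀ i : Fin (l₁ + l₂), l₁ ≤ (i : ℕ) → q i xb = 0 → fderiv ℝ (q i) xb u < 0)

/-- BEPP at x̄: linear independence of equality gradients plus a uniform bound on
extreme points of the multiplier sets near x̄. -/
def BEPP : Prop :=
  LinearIndependent ℝ
      (fun i : {i : Fin (l₁ + l₂) // (i : ℕ) < l₁} => fderiv ℝ (q i.1) xb) ∧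
  ∃ U ∈ 𝓝 xb, ∃ κ > (0 : ℝ), ∀ x ∈ U, x ∈ Gam n l₁ l₂ q →
    ∀ ξ : En n →L[ℝ] ℝ, ∀ lam ∈ Set.extremePoints ℝ (LamSet n l₁ l₂ q x ξ),
      ‖lam‖ ≤ κ * ‖ξ‖

/-- Active constraint indices at x̄ (all equality indices and active inequality indices). -/
def ActiveIdx : Set (Fin (l₁ + l₂)) := {i | (i : ℕ) < l₁ ∨ q i xb = 0}

/-- Rank of the gradient family `{∇q_i(x) | i ∈ A}`. -/
def rankA (x : En n) (A : Finset (Fin (l₁ + l₂))) : ℕ :=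
  Module.finrank ℝ
    ↥(Submodule.span ℝ ((fun i => fderiv ℝ (q i) x) '' (↑A : Set (Fin (l₁ + l₂)))))

/-- CRCQ at x̄. -/
def CRCQ : Prop :=
  ∃ U ∈ 𝓝 xb, ∀ A : Finset (Fin (l₁ + l₂)), ↑A ⊆ ActiveIdx n l₁ l₂ q xb →
    ∀ x ∈ U, rankA n l₁ l₂ q x A = rankA n l₁ l₂ q xb A

/-- The KKT condition at x̄ for minimizing φ over Γ. -/
def KKT : Prop :=
  ∃ lam ∈ NTheta n l₁ l₂ q xb, fderiv ℝ φ xb + gradSum n l₁ l₂ q xb lam = 0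

/-- The set Λ̄_E of extreme multipliers in nonzero critical directions. -/
def LamBarE : Set (En (l₁ + l₂)) :=
  ⋃ v ∈ (Kcone n l₁ l₂ q xb (-(fderiv ℝ φ xb)) \ {0}),
    LamDir n l₁ l₂ q xb (-(fderiv ℝ φ xb)) v ∩
      Set.extremePoints ℝ (LamSet n l₁ l₂ q xb (-(fderiv ℝ φ xb)))

/-- The localized argminimum set M_γ(v*) of the tilted problem. -/
def ArgminSet (γ : ℝ) (v : En n) : Set (En n) :=
  {x | x ∈ Gam n l₁ l₂ q ∧ x ∈ Metric.closedBall xb γ ∧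
    ∀ y, y ∈ Gam n l₁ l₂ q → y ∈ Metric.closedBall xb γ →
      φ x - @inner ℝ _ _ v x ≤ φ y - @inner ℝ _ _ v y}

/-- Tilt-stable local minimizer of φ over Γ with modulus κ. -/
def TiltStableMod (κ : ℝ) : Prop :=
  ∃ γ > (0 : ℝ), ∃ δ > (0 : ℝ), ∃ m : En n → En n, m 0 = xb ∧
    LipschitzOnWith (Real.toNNReal κ) m (Metric.ball (0 : En n) δ) ∧
    ∀ v ∈ Metric.ball (0 : En n) δ, ArgminSet n l₁ l₂ q xb φ γ v = {m v}

/-- Tilt-stable local minimizer (no modulus specified). -/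
def TiltStable : Prop :=
  ∃ K : ℝ≥0, ∃ γ > (0 : ℝ), ∃ δ > (0 : ℝ), ∃ m : En n → En n, m 0 = xb ∧
    LipschitzOnWith K m (Metric.ball (0 : En n) δ) ∧
    ∀ v ∈ Metric.ball (0 : En n) δ, ArgminSet n l₁ l₂ q xb φ γ v = {m v}

end
section stmt0aux

variable {n l₁ l₂ : ℕ} {q : Fin (l₁ + l₂) → En n → ℝ} {xb : En n}

lemma gradSum_apply' (lam : En (l₁ + l₂)) (u : En n) :
    gradSum n l₁ l₂ q xb lam u = ∑ i, lam i * fderiv ℝ (q i) xb u := by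
  simp [gradSum]

lemma gradSum_smul' (c : ℝ) (lam : En (l₁ + l₂)) :
    gradSum n l₁ l₂ q xb (c • lam) = c • gradSum n l₁ l₂ q xb lam := by
  simp only [gradSum, Finset.smul_sum, smul_smul]
  refine Finset.sum_congr rfl fun i _ => ?_
  congr 1

lemma gradSum_zero' : gradSum n l₁ l₂ q xb (0 : En (l₁ + l₂)) = 0 := by
  simp [gradSum]

lemma cont_gradSum' : Continuous (fun lam : En (l₁ + l₂) => gradSum n l₁ l₂ q xb lam) := by
  unfold gradSum
  exact continuous_finset_sum _ fun i _ => (PiLp.continuous_apply 2 _ i).smul continuous_const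

lemma NTheta_smul' {lam : En (l₁ + l₂)} (hlam : lam ∈ NTheta n l₁ l₂ q xb) {c : ℝ}
    (hc : 0 ≤ c) : c • lam ∈ NTheta n l₁ l₂ q xb := by
  intro i hi
  obtain ⟨h1, h2⟩ := hlam i hi
  constructor
  · show (0:ℝ) ≤ c * lam i
    exact mul_nonneg hc h1
  · intro hne
    show c * lam i = 0
    simp [h2 hne]

lemma NTheta_closed' : IsClosed (NTheta n l₁ l₂ q xb) := by
  have heq : NTheta n l₁ l₂ q xb = ⋂ i : Fin (l₁ + l₂),
      {lam : En (l₁ + l₂) | l₁ ≤ (i : ℕ) → 0 ≤ lam i ∧ (q i xb ≠ 0 → lam i = 0)} := by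
    ext lam; simp [NTheta]
  rw [heq]
  refine isClosed_iInter fun i => ?_
  by_cases hi : l₁ ≤ (i : ℕ)
  · have h1 : {lam : En (l₁ + l₂) | l₁ ≤ (i : ℕ) → 0 ≤ lam i ∧ (q i xb ≠ 0 → lam i = 0)}
        = {lam : En (l₁ + l₂) | 0 ≤ lam i ∧ (q i xb ≠ 0 → lam i = 0)} := by
      ext lam; simp [hi]
    rw [h1]
    by_cases hq0 : q i xb = 0
    · have : {lam : En (l₁ + l₂) | 0 ≤ lam i ∧ (q i xb ≠ 0 → lam i = 0)}
          = {lam : En (l₁ + l₂) | 0 ≤ lam i} := by ext lam; simp [hq0]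
      rw [this]
      exact isClosed_le continuous_const ((PiLp.continuous_apply 2 _ i :
        Continuous fun lam : En (l₁ + l₂) => lam i))
    · have : {lam : En (l₁ + l₂) | 0 ≤ lam i ∧ (q i xb ≠ 0 → lam i = 0)}
          = {lam : En (l₁ + l₂) | 0 ≤ lam i} ∩ {lam : En (l₁ + l₂) | lam i = 0} := by
        ext lam; simp [hq0]
      rw [this]
      have hev : Continuous fun lam : En (l₁ + l₂) => lam i := PiLp.continuous_apply 2 _ i
      exact (isClosed_le continuous_const hev).inter (isClosed_eq hev continuous_const)
  · have : {lam : En (l₁ + l₂) | l₁ ≤ (i : ℕ) → 0 ≤ lam i ∧ (q i xb ≠ 0 → lam i = 0)}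
        = Set.univ := by ext lam; simp [hi]
    rw [this]; exact isClosed_univ

end stmt0aux

/-- MFCQ implies the uniform lower bound ‖∇q(x̄)*λ‖ ≥ ‖λ‖/κ on N_Θ(q(x̄)). -/
theorem stmt0 (n l₁ l₂ : ℕ) (q : Fin (l₁ + l₂) → En n → ℝ) (xb : En n)
    (hq : ∀ i, ContDiff ℝ 1 (q i)) (hfeas : Feas n l₁ l₂ q xb)
    (hmfcq : MFCQ n l₁ l₂ q xb) :
    ∃ κ > (0 : ℝ), ∀ lam ∈ NTheta n l₁ l₂ q xb,
      ‖gradSum n l₁ l₂ q xb lam‖ ≥ ‖lam‖ / κ := by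
  obtain ⟨hLI, u, hu₁, hu₂⟩ := hmfcq
  -- injectivity of gradSum on NTheta
  have hinj : ∀ lam ∈ NTheta n l₁ l₂ q xb, gradSum n l₁ l₂ q xb lam = 0 → lam = 0 := by
    intro lam hlam h0
    have happ : ∑ i, lam i * fderiv ℝ (q i) xb u = 0 := by
      have := congrArg (fun ξ : En n →L[ℝ] ℝ => ξ u) h0
      simpa [gradSum_apply'] using this
    have hterm_nonpos : ∀ i ∈ Finset.univ,
        lam i * fderiv ℝ (q i) xb u ≤ 0 := by
      intro i _
      by_cases hi : l₁ ≤ (i : ℕ)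
      · obtain ⟨h1, h2⟩ := hlam i hi
        by_cases hq0 : q i xb = 0
        · exact mul_nonpos_of_nonneg_of_nonpos h1 (le_of_lt (hu₂ i hi hq0))
        · simp [h2 hq0]
      · have : fderiv ℝ (q i) xb u = 0 := hu₁ i (by omega)
        simp [this]
    have hterm_zero : ∀ i ∈ Finset.univ, lam i * fderiv ℝ (q i) xb u = 0 :=
      fun i hi => ((Finset.sum_eq_zero_iff_of_nonpos hterm_nonpos).mp happ) i hi
    have hIzero : ∀ i : Fin (l₁ + l₂), l₁ ≤ (i : ℕ) → lam i = 0 := by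
      intro i hi
      obtain ⟨h1, h2⟩ := hlam i hi
      by_cases hq0 : q i xb = 0
      · have hneg := hu₂ i hi hq0
        have := hterm_zero i (Finset.mem_univ i)
        rcases mul_eq_zero.mp this with h | h
        · exact h
        · exact absurd h (ne_of_lt hneg)
      · exact h2 hq0
    -- now the equality part
    have hsum : ∑ i, lam i • fderiv ℝ (q i) xb = 0 := by
      have := h0; simpa [gradSum] using this
    classical
    have hfilter : ∑ i ∈ Finset.univ.filter (fun i : Fin (l₁ + l₂) => (i : ℕ) < l₁),
        lam i • fderiv ℝ (q i) xb = 0 := by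
      rw [Finset.sum_filter_of_ne]
      · exact hsum
      · intro i _ hne
        by_contra hlt
        exact hne (by simp [hIzero i (by omega)])
    have hsub : ∑ j : {i : Fin (l₁ + l₂) // (i : ℕ) < l₁},
        lam j.1 • fderiv ℝ (q j.1) xb = 0 := by
      have h := Finset.sum_subtype (p := fun i : Fin (l₁ + l₂) => (i : ℕ) < l₁) (F := inferInstance)
        (Finset.univ.filter fun i : Fin (l₁ + l₂) => (i : ℕ) < l₁)
        (by intro x; simp) (fun i => lam i • fderiv ℝ (q i) xb)
      rw [← h]; exact hfilter
    have hEzero : ∀ j : {i : Fin (l₁ + l₂) // (i : ℕ) < l₁}, lam j.1 = 0 :=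
      Fintype.linearIndependent_iff.mp hLI (fun j => lam j.1) hsub
    ext i
    by_cases hi : (i : ℕ) < l₁
    · exact hEzero ⟨i, hi⟩
    · exact hIzero i (by omega)
  -- compactness argument
  set C : Set (En (l₁ + l₂)) := NTheta n l₁ l₂ q xb ∩ Metric.sphere 0 1 with hCdef
  have hcomp : IsCompact C := (isCompact_sphere 0 1).inter_left NTheta_closed'
  have hmemC : ∀ lam ∈ NTheta n l₁ l₂ q xb, lam ≠ 0 → (‖lam‖⁻¹ • lam) ∈ C := by
    intro lam hlam hne
    have hn : ‖lam‖ ≠ 0 := norm_ne_zero_iff.mpr hne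
    refine ⟨NTheta_smul' hlam (by positivity), ?_⟩
    simp [norm_smul, abs_of_nonneg (norm_nonneg lam), inv_mul_cancel₀ hn]
  by_cases hCne : C.Nonempty
  · obtain ⟨c, hcC, hcmin⟩ := hcomp.exists_isMinOn hCne
      ((continuous_norm.comp cont_gradSum').continuousOn)
    set m : ℝ := ‖gradSum n l₁ l₂ q xb c‖ with hmdef
    have hcne : c ≠ 0 := by
      intro h; rw [h] at hcC
      have := hcC.2; simp at this
    have hmpos : 0 < m := by
      rcases (norm_nonneg (gradSum n l₁ l₂ q xb c)).lt_or_eq with h | h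
      · exact h
      · exfalso
        exact hcne (hinj c hcC.1 (norm_eq_zero.mp h.symm))
    refine ⟨m⁻¹, inv_pos.mpr hmpos, fun lam hlam => ?_⟩
    rcases eq_or_ne lam 0 with rfl | hne
    · simp [gradSum_zero']
    · have hn : (0:ℝ) < ‖lam‖ := norm_pos_iff.mpr hne
      have hmem := hmemC lam hlam hne
      have hge2 : m ≤ ‖lam‖⁻¹ * ‖gradSum n l₁ l₂ q xb lam‖ := by
        calc m ≤ ‖gradSum n l₁ l₂ q xb (‖lam‖⁻¹ • lam)‖ := hcmin hmem
          _ = ‖lam‖⁻¹ * ‖gradSum n l₁ l₂ q xb lam‖ := by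
              rw [gradSum_smul']
              rw [norm_smul (‖lam‖⁻¹) (gradSum n l₁ l₂ q xb lam)]
              rw [Real.norm_eq_abs, abs_of_nonneg (inv_nonneg.mpr (norm_nonneg lam))]
      have hN : ‖lam‖ * m ≤ ‖gradSum n l₁ l₂ q xb lam‖ := by
        calc ‖lam‖ * m ≤ ‖lam‖ * (‖lam‖⁻¹ * ‖gradSum n l₁ l₂ q xb lam‖) :=
              mul_le_mul_of_nonneg_left hge2 (le_of_lt hn)
          _ = ‖gradSum n l₁ l₂ q xb lam‖ := by field_simp
      calc ‖lam‖ / m⁻¹ = ‖lam‖ * m := by rw [div_eq_mul_inv, inv_inv]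
        _ ≤ ‖gradSum n l₁ l₂ q xb lam‖ := hN
  · refine ⟨1, one_pos, fun lam hlam => ?_⟩
    rcases eq_or_ne lam 0 with rfl | hne
    · simp [gradSum_zero']
    · exact absurd ⟨_, hmemC lam hlam hne⟩ hCne
end

section
/- The full rank constraint qualification implies the constant rank constraint qualification: if for every subset A of the active constraint indices at x̄ one has rank{∇q_i(x̄) | i∈A} = min{|A|, n}, then there is a neighborhood U of x̄ such that for every subset A of the active constraint indices at x̄, the family {∇q_i(x) | i∈A} has the same rank for all x ∈ U. -/
open Metric Set Filter Topology
open scoped RealInnerProductSpace NNReal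

/-- the full rank constraint qualification implies the constant rank
constraint qualification. -/
theorem stmt2 (n l₁ l₂ : ℕ) (q : Fin (l₁ + l₂) → En n → ℝ) (xb : En n)
    (hq : ∀ i, ContDiff ℝ 1 (q i)) (hfeas : Feas n l₁ l₂ q xb)
    (hfrcq : ∀ A : Finset (Fin (l₁ + l₂)), ↑A ⊆ ActiveIdx n l₁ l₂ q xb →
      rankA n l₁ l₂ q xb A = min A.card n) :
    CRCQ n l₁ l₂ q xb := by
  classical
  set f : En n → Fin (l₁ + l₂) → (En n →L[ℝ] ℝ) := fun x i => fderiv ℝ (q i) x with hf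
  -- dimension of the dual space
  have hdim : Module.finrank ℝ (En n →L[ℝ] ℝ) = n := by
    rw [← (LinearMap.toContinuousLinearMap (E := En n) (F' := ℝ)).finrank_eq]
    simp [Module.finrank_linearMap]
  -- rank is always at most min (card, n)
  have hle : ∀ (x : En n) (A : Finset (Fin (l₁ + l₂))),
      rankA n l₁ l₂ q x A ≤ min A.card n := by
    intro x A
    apply le_min
    · unfold rankA
      rw [← Finset.coe_image]
      exact (finrank_span_finset_le_card _).trans (Finset.card_image_le)
    · calc rankA n l₁ l₂ q x A ≤ Module.finrank ℝ (En n →L[ℝ] ℝ) :=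
            Submodule.finrank_le _
        _ = n := hdim
  -- rank of a finset B equals B.card iff the restricted family is independent
  have hiff : ∀ (x : En n) (B : Finset (Fin (l₁ + l₂))),
      LinearIndependent ℝ (fun i : ↥B => f x i) ↔ rankA n l₁ l₂ q x B = B.card := by
    intro x B
    rw [linearIndependent_iff_card_eq_finrank_span, Fintype.card_coe]
    unfold rankA Set.finrank
    rw [Set.image_eq_range (fun i => fderiv ℝ (q i) x) (↑B : Set (Fin (l₁ + l₂)))]
    exact eq_comm
  -- key: for each admissible A, the rank is locally constant
  have key : ∀ A : Finset (Fin (l₁ + l₂)), ↑A ⊆ ActiveIdx n l₁ l₂ q xb →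
      ∀ᶠ x in 𝓝 xb, rankA n l₁ l₂ q x A = rankA n l₁ l₂ q xb A := by
    intro A hA
    set m := min A.card n with hm
    obtain ⟨B, hBA, hBcard⟩ := Finset.exists_subset_card_eq (min_le_left A.card n)
    have hBactive : ↑B ⊆ ActiveIdx n l₁ l₂ q xb :=
      Set.Subset.trans (Finset.coe_subset.2 hBA) hA
    have hrB : rankA n l₁ l₂ q xb B = B.card := by
      rw [hfrcq B hBactive, hBcard]
      exact min_eq_left (min_le_right _ _)
    -- the family over B is linearly independent at xb
    have hindep : LinearIndependent ℝ (fun i : ↥B => f xb i) := (hiff xb B).2 hrB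
    -- independence persists in a neighborhood
    have hcont : Continuous (fun x => (fun i : ↥B => f x i)) := by
      apply continuous_pi
      intro i
      exact (hq i).continuous_fderiv one_ne_zero
    have hopen : IsOpen ((fun x => (fun i : ↥B => f x i)) ⁻¹'
        {g : ↥B → (En n →L[ℝ] ℝ) | LinearIndependent ℝ g}) :=
      isOpen_setOf_linearIndependent.preimage hcont
    have hnhds : ∀ᶠ x in 𝓝 xb, LinearIndependent ℝ (fun i : ↥B => f x i) :=
      hopen.mem_nhds hindep
    refine hnhds.mono ?_
    intro x hx
    have h1 : rankA n l₁ l₂ q x B = B.card := (hiff x B).1 hx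
    have h2 : rankA n l₁ l₂ q x B ≤ rankA n l₁ l₂ q x A := by
      apply Submodule.finrank_mono
      exact Submodule.span_mono (Set.image_mono (Finset.coe_subset.2 hBA))
    have h3 : rankA n l₁ l₂ q x A ≤ m := hle x A
    have h4 : m ≤ rankA n l₁ l₂ q x A := by
      rw [hm, ← hBcard, ← h1]; exact h2
    rw [hfrcq A hA, ← hm]
    exact le_antisymm h3 h4
  -- combine over the finitely many subsets A
  have hall : ∀ᶠ x in 𝓝 xb, ∀ A : Finset (Fin (l₁ + l₂)),
      ↑A ⊆ ActiveIdx n l₁ l₂ q xb → rankA n l₁ l₂ q x A = rankA n l₁ l₂ q xb A := by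
    rw [Filter.eventually_all]
    intro A
    by_cases hA : ↑A ⊆ ActiveIdx n l₁ l₂ q xb
    · exact (key A hA).mono fun x hx _ => hx
    · exact Filter.Eventually.of_forall fun x hh => absurd hh hA
  obtain ⟨U, hU, hUsub⟩ := Filter.eventually_iff_exists_mem.1 hall
  exact ⟨U, hU, fun A hA x hx => hUsub x hx A hA⟩
end

section
/- A Lagrange multiplier λ ∈ Λ(x,x*) is an extreme point of the convex polyhedron Λ(x,x*) if and only if the family of gradients {∇q_i(x) | i ∈ E ∪ I⁺(λ)} is linearly independent, where I⁺(λ) = {i ∈ I | λ_i > 0}. -/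
open Metric Set Filter Topology
open scoped RealInnerProductSpace NNReal

open Classical in
private lemma stmt3_sum_extend {N : ℕ} {M : Type*} [AddCommGroup M] (P : Fin N → Prop)
    [Fintype (Subtype P)] (f : Fin N → M) (hf : ∀ i, ¬ P i → f i = 0) :
    ∑ i, f i = ∑ j : Subtype P, f j.1 := by
  classical
  rw [← Finset.sum_filter_of_ne (p := P) (fun i _ hne => by_contra fun hP => hne (hf i hP))]
  exact Finset.sum_subtype _ (fun i => by simp) f

/-- λ ∈ Λ(x,x*) is an extreme point of Λ(x,x*) iff the gradients
`{∇q_i(x) | i ∈ E ∪ I⁺(λ)}` are linearly independent. -/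
theorem stmt3 (n l₁ l₂ : ℕ) (q : Fin (l₁ + l₂) → En n → ℝ) (x : En n)
    (hq : ∀ i, ContDiff ℝ 1 (q i)) (hfeas : Feas n l₁ l₂ q x)
    (ξ : En n →L[ℝ] ℝ) (lam : En (l₁ + l₂)) (hlam : lam ∈ LamSet n l₁ l₂ q x ξ) :
    lam ∈ Set.extremePoints ℝ (LamSet n l₁ l₂ q x ξ) ↔
      LinearIndependent ℝ
        (fun i : {i : Fin (l₁ + l₂) // (i : ℕ) < l₁ ∨ 0 < lam i} =>
          fderiv ℝ (q i.1) x) := by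
    classical
  have hnn : ∀ i : Fin (l₁ + l₂), l₁ ≤ (i : ℕ) → 0 ≤ lam i := fun i hi => (hlam.1 i hi).1
  constructor
  · -- extreme point → linearly independent
    intro hext
    by_contra hdep
    rw [Fintype.not_linearIndependent_iff] at hdep
    obtain ⟨g, hg0, j, hj⟩ := hdep
    set c : En (l₁ + l₂) :=
      WithLp.toLp 2 (fun i : Fin (l₁ + l₂) => if h : (i : ℕ) < l₁ ∨ 0 < lam i then g ⟨i, h⟩ else 0) with hc
    have hcP : ∀ (i : Fin (l₁ + l₂)) (h : (i : ℕ) < l₁ ∨ 0 < lam i), c i = g ⟨i, h⟩ := fun i h => dif_pos h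
    have hcnP : ∀ i : Fin (l₁ + l₂), ¬ ((i : ℕ) < l₁ ∨ 0 < lam i) → c i = 0 := fun i h => dif_neg h
    have hcsum : ∑ i, c i • fderiv ℝ (q i) x = 0 := by
      rw [stmt3_sum_extend (fun i => (i : ℕ) < l₁ ∨ 0 < lam i)
        (fun i => c i • fderiv ℝ (q i) x)
        (fun i h => by simp only [hcnP i h, zero_smul])]
      rw [← hg0]
      exact Finset.sum_congr rfl fun i _ => by rw [hcP i.1 i.2]
    have hcpos : ∀ i : Fin (l₁ + l₂), l₁ ≤ (i : ℕ) → c i ≠ 0 → 0 < lam i := by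
      intro i hi hci
      by_contra hl
      exact hci (hcnP i (not_or.mpr ⟨not_lt.mpr hi, hl⟩))
    -- choose a small positive t
    set F : Fin (l₁ + l₂) → ℝ :=
      fun i => if l₁ ≤ (i : ℕ) ∧ c i ≠ 0 then lam i / |c i| else 1 with hF
    have hFpos : ∀ i, 0 < F i := by
      intro i
      by_cases h : l₁ ≤ (i : ℕ) ∧ c i ≠ 0
      · rw [hF]; simp only [if_pos h]
        exact div_pos (hcpos i h.1 h.2) (abs_pos.mpr h.2)
      · rw [hF]; simp only [if_neg h]; norm_num
    obtain ⟨t, htpos, htle⟩ : ∃ t : ℝ, 0 < t ∧ ∀ i, t ≤ F i := by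
      refine ⟨(insert (1:ℝ) (Finset.image F Finset.univ)).min'
        ⟨1, Finset.mem_insert_self _ _⟩, ?_, ?_⟩
      · rcases Finset.mem_insert.mp (Finset.min'_mem
          (insert (1:ℝ) (Finset.image F Finset.univ)) ⟨1, Finset.mem_insert_self _ _⟩) with h | h
        · rw [h]; norm_num
        · obtain ⟨i, _, hi⟩ := Finset.mem_image.mp h
          rw [← hi]; exact hFpos i
      · intro i
        exact Finset.min'_le _ _
          (Finset.mem_insert_of_mem (Finset.mem_image_of_mem F (Finset.mem_univ i)))
    have hbound : ∀ i : Fin (l₁ + l₂), l₁ ≤ (i : ℕ) → t * |c i| ≤ lam i := by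
      intro i hi
      by_cases hci : c i = 0
      · rw [hci]; simpa using hnn i hi
      · have h1 : t ≤ lam i / |c i| := by
          have h2 := htle i
          simp only [hF] at h2
          rwa [if_pos ⟨hi, hci⟩] at h2
        rw [← le_div_iff₀ (abs_pos.mpr hci)]; exact h1
    -- both lam + s • c belong to LamSet for |s| ≤ t related bound
    have hmem : ∀ s : ℝ, |s| = t → lam + s • c ∈ LamSet n l₁ l₂ q x ξ := by
      intro s hs
      constructor
      · intro i hi
        constructor
        · have h1 : |s * c i| ≤ lam i := by
            rw [abs_mul, hs]; exact hbound i hi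
          have h2 := neg_abs_le (s * c i)
          have h3 : (lam + s • c) i = lam i + s * c i := rfl
          rw [h3]; linarith
        · intro hqi
          have h0 : lam i = 0 := (hlam.1 i hi).2 hqi
          have hci : c i = 0 := hcnP i (not_or.mpr ⟨not_lt.mpr hi, by rw [h0]; exact lt_irrefl 0⟩)
          show lam i + s * c i = 0
          rw [h0, hci]; ring
      · have : gradSum n l₁ l₂ q x (lam + s • c)
            = gradSum n l₁ l₂ q x lam + s • ∑ i, c i • fderiv ℝ (q i) x := by
          simp only [gradSum, Finset.smul_sum]
          rw [← Finset.sum_add_distrib]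
          refine Finset.sum_congr rfl fun i _ => ?_
          have h3 : (lam + s • c) i = lam i + s * c i := rfl
          rw [h3, add_smul, mul_smul]
        rw [this, hcsum, smul_zero, add_zero, hlam.2]
    have hμ := hmem t (abs_of_pos htpos)
    have hν := hmem (-t) (by rw [abs_neg, abs_of_pos htpos])
    have hseg : lam ∈ openSegment ℝ (lam + t • c) (lam + (-t) • c) := by
      refine ⟨1/2, 1/2, by norm_num, by norm_num, by norm_num, ?_⟩
      module
    have := (mem_extremePoints.mp hext).2 _ hμ _ hν hseg
    have hc0 : t • c = 0 := by
      have h := this.1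
      have : lam + t • c - lam = 0 := by rw [h]; abel
      simpa using this
    have : c j.1 = 0 := by
      have := congrFun (congrArg (fun f : En (l₁ + l₂) => (f : Fin (l₁ + l₂) → ℝ)) hc0) j.1
      have h2 : t * c j.1 = 0 := this
      rcases mul_eq_zero.mp h2 with h | h
      · exact absurd h (ne_of_gt htpos)
      · exact h
    rw [hcP j.1 j.2] at this
    simp only [Subtype.coe_eta] at this
    exact hj this
  · -- linearly independent → extreme point
    intro hli
    rw [mem_extremePoints]
    refine ⟨hlam, ?_⟩
    intro μ hμ ν hν hseg
    obtain ⟨a, b, ha, hb, hab, habx⟩ := hseg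
    have hlam0 : ∀ i : Fin (l₁ + l₂), ¬ ((i : ℕ) < l₁ ∨ 0 < lam i) → lam i = 0 := by
      intro i h
      push_neg at h
      exact le_antisymm h.2 (hnn i h.1)
    have key : ∀ η ∈ LamSet n l₁ l₂ q x ξ,
        (∀ i : Fin (l₁ + l₂), ¬ ((i : ℕ) < l₁ ∨ 0 < lam i) → η i = 0) → η = lam := by
      intro η hη hηoff
      have hsum0 : ∑ i, (η i - lam i) • fderiv ℝ (q i) x = 0 := by
        have h1 : ∑ i, (η i - lam i) • fderiv ℝ (q i) x
            = gradSum n l₁ l₂ q x η - gradSum n l₁ l₂ q x lam := by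
          simp only [gradSum, sub_smul, Finset.sum_sub_distrib]
        rw [h1, hη.2, hlam.2, sub_self]
      rw [stmt3_sum_extend (fun i => (i : ℕ) < l₁ ∨ 0 < lam i)
        (fun i => (η i - lam i) • fderiv ℝ (q i) x)
        (fun i h => by simp only [hηoff i h, hlam0 i h, sub_self, zero_smul])] at hsum0
      have hz := Fintype.linearIndependent_iff.mp hli (fun j => η j.1 - lam j.1) hsum0
      ext i
      by_cases h : (i : ℕ) < l₁ ∨ 0 < lam i
      · have h2 : η i - lam i = 0 := hz ⟨i, h⟩
        linarith
      · rw [hηoff i h, hlam0 i h]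
    have hoff : ∀ i : Fin (l₁ + l₂), ¬ ((i : ℕ) < l₁ ∨ 0 < lam i) → μ i = 0 ∧ ν i = 0 := by
      intro i h
      have hile : l₁ ≤ (i : ℕ) := le_of_not_gt (fun hl => h (Or.inl hl))
      have hl0 : lam i = 0 := hlam0 i h
      have hμi : 0 ≤ μ i := (hμ.1 i hile).1
      have hνi : 0 ≤ ν i := (hν.1 i hile).1
      have hx : a * μ i + b * ν i = lam i :=
        congrFun (congrArg (fun f : En (l₁ + l₂) => (fun k : Fin (l₁ + l₂) => f k)) habx) i
      rw [hl0] at hx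
      have h1 : a * μ i = 0 := by nlinarith [mul_nonneg ha.le hμi, mul_nonneg hb.le hνi]
      have h2 : b * ν i = 0 := by linarith
      constructor
      · rcases mul_eq_zero.mp h1 with h | h
        · exact absurd h ha.ne'
        · exact h
      · rcases mul_eq_zero.mp h2 with h | h
        · exact absurd h hb.ne'
        · exact h
    show μ = lam ∧ ν = lam
    refine ⟨?_, ?_⟩
    · exact key μ hμ (fun i h => (hoff i h).1)
    · exact key ν hν (fun i h => (hoff i h).2)
end

section
/- Let MSCQ hold at x̄ ∈ Γ and (x,x*) ∈ graph N̂_Γ with x near x̄. Then for every critical direction v ∈ K(x,x*) the directional multiplier set Λ(x,x*;v) = argmax{⟨v, ∇²⟨λ,q⟩(x)v⟩ : λ ∈ Λ(x,x*)} is nonempty; i.e., the linear program maximizing λ ↦ ⟨v,∇²⟨λ,q⟩(x)v⟩ over the polyhedron Λ(x,x*) has an optimal solution. -/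
open Metric Set Filter Topology
open scoped RealInnerProductSpace NNReal

open Filter

section Farkas
variable {E : Type*} [NormedAddCommGroup E] [NormedSpace ℝ E]

lemma farkas_fin : ∀ (m : ℕ) (f : Fin m → (E →L[ℝ] ℝ)) (ξ : E →L[ℝ] ℝ),
    (∀ u : E, (∀ i, f i u ≤ 0) → ξ u ≤ 0) →
    ∃ μ : Fin m → ℝ, (∀ i, 0 ≤ μ i) ∧ ξ = ∑ i, μ i • f i := by
  intro m
  induction m with
  | zero =>
    intro f ξ h
    refine ⟨0, fun i => le_rfl, ?_⟩
    have h0 : ∀ u : E, ξ u = 0 := by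
      intro u
      have h1 := h u (fun i => i.elim0)
      have h2 := h (-u) (fun i => i.elim0)
      simp only [map_neg] at h2
      linarith
    ext u
    simpa using h0 u
  | succ m IH =>
    intro f ξ h
    set g := f (Fin.last m) with hg
    set f' : Fin m → (E →L[ℝ] ℝ) := fun i => f i.castSucc with hf'
    by_cases hc : ∀ u : E, (∀ i, f' i u ≤ 0) → ξ u ≤ 0
    · obtain ⟨μ, hμ0, hμ⟩ := IH f' ξ hc
      refine ⟨Fin.snoc μ 0, ?_, ?_⟩
      · intro i
        induction i using Fin.lastCases with
        | last => simp
        | cast i => simpa using hμ0 i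
      · rw [Fin.sum_univ_castSucc]
        simp only [Fin.snoc_castSucc, Fin.snoc_last, zero_smul, add_zero]
        exact hμ
    · push_neg at hc
      obtain ⟨w, hw, hξw⟩ := hc
      have hgw : 0 < g w := by
        by_contra hgw
        push_neg at hgw
        have : ∀ i : Fin (m+1), f i w ≤ 0 := by
          intro i
          induction i using Fin.lastCases with
          | last => exact hgw
          | cast i => exact hw i
        linarith [h w this]
      have hgwne : g w ≠ 0 := ne_of_gt hgw
      set T : (E →L[ℝ] ℝ) → (E →L[ℝ] ℝ) := fun p => p - (p w / g w) • g with hT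
      have hTapp : ∀ (p : E →L[ℝ] ℝ) (u : E), T p u = p u - (p w / g w) * g u := by
        intro p u; simp [hT]
      have key : ∀ u : E, (∀ i, T (f' i) u ≤ 0) → T ξ u ≤ 0 := by
        intro u hu
        set u' := u - (g u / g w) • w with hu'
        have hgu' : g u' = 0 := by
          simp only [hu', map_sub, map_smul, smul_eq_mul]
          field_simp
          ring
        have hfu' : ∀ i, f' i u' = T (f' i) u := by
          intro i
          simp only [hu', map_sub, map_smul, smul_eq_mul, hTapp]
          ring
        have hall : ∀ i : Fin (m+1), f i u' ≤ 0 := by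
          intro i
          induction i using Fin.lastCases with
          | last => rw [← hg, hgu']
          | cast i => rw [show f i.castSucc = f' i from rfl, hfu' i]; exact hu i
        have := h u' hall
        have hξu' : ξ u' = T ξ u := by
          simp only [hu', map_sub, map_smul, smul_eq_mul, hTapp]
          ring
        linarith [hξu' ▸ this]
      obtain ⟨μ, hμ0, hμ⟩ := IH (fun i => T (f' i)) (T ξ) key
      set α := (ξ w - ∑ i, μ i * f' i w) / g w with hα
      have hα0 : 0 ≤ α := by
        apply div_nonneg _ (le_of_lt hgw)
        have : ∑ i, μ i * f' i w ≤ 0 :=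
          Finset.sum_nonpos fun i _ => mul_nonpos_of_nonneg_of_nonpos (hμ0 i) (hw i)
        linarith
      refine ⟨Fin.snoc μ α, ?_, ?_⟩
      · intro i
        induction i using Fin.lastCases with
        | last => simpa using hα0
        | cast i => simpa using hμ0 i
      · rw [Fin.sum_univ_castSucc]
        simp only [Fin.snoc_castSucc, Fin.snoc_last]
        ext u
        have hμu := congrArg (fun (p : E →L[ℝ] ℝ) => p u) hμ
        simp only [ContinuousLinearMap.sum_apply, ContinuousLinearMap.smul_apply,
          ContinuousLinearMap.add_apply, smul_eq_mul, hTapp] at hμu ⊢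
        rw [show (∑ i, μ i * (f' i u - f' i w / g w * g u))
            = (∑ i, μ i * f' i u) - (∑ i, μ i * f' i w) / g w * g u by
          rw [Finset.sum_div, Finset.sum_mul, ← Finset.sum_sub_distrib]
          exact Finset.sum_congr rfl fun i _ => by ring] at hμu
        have : ξ u = (∑ i, μ i * f' i u) - (∑ i, μ i * f' i w) / g w * g u
            + (ξ w / g w) * g u := by linarith
        rw [this, hα]
        field_simp
        ring
end Farkas


open Filter Metric Module Set Topology

section Attain

lemma recession_dir {E : Type} [NormedAddCommGroup E] [InnerProductSpace ℝ E]
    [FiniteDimensional ℝ E] {ι : Type} [Fintype ι]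
    (f : ι → E →L[ℝ] ℝ) (b : ι → ℝ) (c : E →L[ℝ] ℝ) (B : ℝ) (x : ℕ → E)
    (hx : ∀ k, ∀ i, f i (x k) ≤ b i) (hB : ∀ k, B ≤ c (x k))
    (hnorm : Tendsto (fun k => ‖x k‖) atTop atTop) :
    ∃ u : E, ‖u‖ = 1 ∧ (∀ i, f i u ≤ 0) ∧ 0 ≤ c u := by
  have hne : ∀ᶠ k in atTop, x k ≠ 0 := by
    filter_upwards [hnorm.eventually_ge_atTop 1] with k hk
    intro h0; rw [h0, norm_zero] at hk; linarith
  obtain ⟨K, hK⟩ := eventually_atTop.1 hne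
  have hz0 : ∀ k, x (k + K) ≠ 0 := fun k => hK _ (Nat.le_add_left _ _)
  have hy1 : ∀ k, (‖x (k + K)‖⁻¹ • x (k + K)) ∈ sphere (0:E) 1 := by
    intro k
    simp only [mem_sphere_iff_norm, sub_zero, norm_smul, norm_inv, norm_norm]
    exact inv_mul_cancel₀ (norm_ne_zero_iff.2 (hz0 k))
  obtain ⟨u, hu_mem, φ, hφ, hconv⟩ := (isCompact_sphere (0:E) 1).tendsto_subseq hy1
  have hu_norm : ‖u‖ = 1 := by simpa using hu_mem
  have hzn : Tendsto (fun k => ‖x (k + K)‖) atTop atTop :=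
    hnorm.comp (tendsto_add_atTop_nat K)
  have hzn' : Tendsto (fun k => ‖x (φ k + K)‖) atTop atTop := hzn.comp hφ.tendsto_atTop
  have hinv : Tendsto (fun k => ‖x (φ k + K)‖⁻¹) atTop (𝓝 0) :=
    tendsto_inv_atTop_zero.comp hzn'
  have hconv' : Tendsto (fun k => ‖x (φ k + K)‖⁻¹ • x (φ k + K)) atTop (𝓝 u) := hconv
  refine ⟨u, hu_norm, ?_, ?_⟩
  · intro i
    have h1 : Tendsto (fun k => f i (‖x (φ k + K)‖⁻¹ • x (φ k + K))) atTop (𝓝 (f i u)) :=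
      ((f i).continuous.tendsto u).comp hconv'
    have h2 : Tendsto (fun k => ‖x (φ k + K)‖⁻¹ * b i) atTop (𝓝 0) := by
      simpa using hinv.mul_const (b i)
    refine le_of_tendsto_of_tendsto' h1 h2 fun k => ?_
    rw [map_smul, smul_eq_mul]
    exact mul_le_mul_of_nonneg_left (hx _ i) (inv_nonneg.2 (norm_nonneg _))
  · have h1 : Tendsto (fun k => c (‖x (φ k + K)‖⁻¹ • x (φ k + K))) atTop (𝓝 (c u)) :=
      (c.continuous.tendsto u).comp hconv'
    have h2 : Tendsto (fun k => ‖x (φ k + K)‖⁻¹ * B) atTop (𝓝 0) := by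
      simpa using hinv.mul_const B
    refine le_of_tendsto_of_tendsto' h2 h1 fun k => ?_
    rw [map_smul, smul_eq_mul]
    exact mul_le_mul_of_nonneg_left (hB _) (inv_nonneg.2 (norm_nonneg _))

lemma lp_attain (d : ℕ) : ∀ (E : Type) [NormedAddCommGroup E] [InnerProductSpace ℝ E]
    [FiniteDimensional ℝ E], finrank ℝ E = d →
    ∀ {ι : Type} [Fintype ι] (f : ι → E →L[ℝ] ℝ) (b : ι → ℝ) (c : E →L[ℝ] ℝ),
    (∃ x, ∀ i, f i x ≤ b i) → (∀ u, (∀ i, f i u ≤ 0) → c u ≤ 0) →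
    ∃ x, (∀ i, f i x ≤ b i) ∧ ∀ y, (∀ i, f i y ≤ b i) → c y ≤ c x := by
  induction d using Nat.strong_induction_on with
  | _ d IH =>
  intro E _ _ _ hd ι _ f b c hne H
  classical
  obtain ⟨x₀, hx₀⟩ := hne
  set P : Set E := {x | ∀ i, f i x ≤ b i} with hP
  have hPclosed : IsClosed P := by
    have : P = ⋂ i, {x : E | f i x ≤ b i} := by
      ext w; simp [hP, Set.mem_iInter]
    rw [this]
    exact isClosed_iInter fun i => isClosed_le (f i).continuous continuous_const
  -- the dimension-reduction step
  have reduction : ∀ u : E, ‖u‖ = 1 → (∀ i, f i u ≤ 0) → 0 ≤ c u →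
      ∃ x, (∀ i, f i x ≤ b i) ∧ ∀ y, (∀ i, f i y ≤ b i) → c y ≤ c x := by
    intro u hu1 hfu hcu0
    have hcu : c u = 0 := le_antisymm (H u hfu) hcu0
    have hu0 : u ≠ 0 := by intro h; rw [h, norm_zero] at hu1; norm_num at hu1
    haveI : Nontrivial E := nontrivial_of_ne u 0 hu0
    set g : E →L[ℝ] ℝ := innerSL ℝ u with hgdef
    have hgu : g u = 1 := by
      simp only [hgdef, innerSL_apply_apply, real_inner_self_eq_norm_mul_norm, hu1, mul_one]
    set K : Submodule ℝ E := LinearMap.ker (g : E →ₗ[ℝ] ℝ) with hKdef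
    have hgmem : ∀ w : E, w - g w • u ∈ K := by
      intro w
      simp only [hKdef, LinearMap.mem_ker, ContinuousLinearMap.coe_coe, map_sub, map_smul,
        smul_eq_mul, hgu, mul_one, sub_self]
    have hrange : LinearMap.range (g : E →ₗ[ℝ] ℝ) = ⊤ := by
      rw [LinearMap.range_eq_top]
      intro t
      exact ⟨t • u, by simp [hgu]⟩
    have hdpos : 0 < d := by
      rw [← hd]; exact finrank_pos
    have hKrank : finrank ℝ K = d - 1 := by
      have h1 := LinearMap.finrank_range_add_finrank_ker (g : E →ₗ[ℝ] ℝ)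
      rw [hrange, hd, ← hKdef] at h1
      have h2 : finrank ℝ ↥(⊤ : Submodule ℝ ℝ) = 1 := by simp
      omega
    set ι' := {i : ι // f i u = 0} with hι'
    set f' : ι' → (K →L[ℝ] ℝ) := fun i => (f i.1).comp K.subtypeL with hf'
    set b' : ι' → ℝ := fun i => b i.1 with hb'
    set c' : K →L[ℝ] ℝ := c.comp K.subtypeL with hc'
    have happ : ∀ (h : E →L[ℝ] ℝ) (w : K), h.comp K.subtypeL w = h (w : E) := fun _ _ => rfl
    have hne' : ∃ w : K, ∀ i, f' i w ≤ b' i := by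
      refine ⟨⟨x₀ - g x₀ • u, hgmem x₀⟩, fun i => ?_⟩
      rw [hf']
      show (f i.1) (x₀ - g x₀ • u) ≤ b i.1
      rw [map_sub, map_smul, smul_eq_mul, i.2, mul_zero, sub_zero]
      exact hx₀ i.1
    have H' : ∀ w : K, (∀ i, f' i w ≤ 0) → c' w ≤ 0 := by
      intro w hw
      set s : ℝ := ∑ i : ι, max 0 (f i (w : E) / (-(f i u))) with hs
      have hs_i : ∀ i : ι, max 0 (f i (w : E) / (-(f i u))) ≤ s :=
        fun i => Finset.single_le_sum (f := fun j : ι => max 0 (f j (w : E) / (-(f j u))))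
          (fun j _ => le_max_left _ _) (Finset.mem_univ i)
      have hs0 : 0 ≤ s := Finset.sum_nonneg fun j _ => le_max_left _ _
      have hall : ∀ i, f i ((w : E) + s • u) ≤ 0 := by
        intro i
        rw [map_add, map_smul, smul_eq_mul]
        rcases lt_or_eq_of_le (hfu i) with hlt | heq
        · have hq : f i (w : E) / (-(f i u)) ≤ s := le_trans (le_max_right _ _) (hs_i i)
          have h2 : s * f i u ≤ (f i (w : E) / (-(f i u))) * f i u :=
            mul_le_mul_of_nonpos_right hq (le_of_lt hlt)
          have h3 : (f i (w : E) / (-(f i u))) * f i u = -(f i (w : E)) := by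
            rw [div_neg, neg_mul, div_mul_cancel₀ _ (ne_of_lt hlt)]
          linarith
        · have h4 : f i (w : E) ≤ 0 := hw ⟨i, heq⟩
          rw [heq, mul_zero, add_zero]
          exact h4
      have := H _ hall
      rw [map_add, map_smul, smul_eq_mul, hcu, mul_zero, add_zero] at this
      exact this
    obtain ⟨y', hy'P, hy'max⟩ := IH (d - 1) (by omega) K hKrank f' b' c' hne' H'
    set s' : ℝ := ∑ i : ι, max 0 ((f i (y' : E) - b i) / (-(f i u))) with hs'
    have hs'_i : ∀ i : ι, max 0 ((f i (y' : E) - b i) / (-(f i u))) ≤ s' :=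
      fun i => Finset.single_le_sum (f := fun j : ι => max 0 ((f j (y' : E) - b j) / (-(f j u))))
        (fun j _ => le_max_left _ _) (Finset.mem_univ i)
    refine ⟨(y' : E) + s' • u, ?_, ?_⟩
    · intro i
      rw [map_add, map_smul, smul_eq_mul]
      rcases lt_or_eq_of_le (hfu i) with hlt | heq
      · have hq : (f i (y' : E) - b i) / (-(f i u)) ≤ s' :=
          le_trans (le_max_right _ _) (hs'_i i)
        have h2 : s' * f i u ≤ ((f i (y' : E) - b i) / (-(f i u))) * f i u :=
          mul_le_mul_of_nonpos_right hq (le_of_lt hlt)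
        have h3 : ((f i (y' : E) - b i) / (-(f i u))) * f i u = -(f i (y' : E) - b i) := by
          rw [div_neg, neg_mul, div_mul_cancel₀ _ (ne_of_lt hlt)]
        linarith
      · have h4 : f i (y' : E) ≤ b i := hy'P ⟨i, heq⟩
        rw [heq, mul_zero, add_zero]
        exact h4
    · intro y hy
      have hρ : y - g y • u ∈ K := hgmem y
      have hρP : ∀ i, f' i ⟨y - g y • u, hρ⟩ ≤ b' i := by
        intro i
        rw [hf']
        show (f i.1) (y - g y • u) ≤ b i.1
        rw [map_sub, map_smul, smul_eq_mul, i.2, mul_zero, sub_zero]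
        exact hy i.1
      have h5 := hy'max _ hρP
      rw [hc'] at h5
      have h6 : c (y - g y • u) ≤ c (y' : E) := h5
      rw [map_sub, map_smul, smul_eq_mul, hcu, mul_zero, sub_zero] at h6
      rw [map_add, map_smul, smul_eq_mul, hcu, mul_zero, add_zero]
      exact h6
  -- main dichotomy
  by_cases hbd : BddAbove (c '' P)
  · set S : ℝ := sSup (c '' P) with hS
    have hseq : ∀ k : ℕ, ∃ x ∈ P, S - 1/((k:ℝ)+1) < c x := by
      intro k
      have h1 : S - 1/((k:ℝ)+1) < S := by
        have : (0:ℝ) < 1/((k:ℝ)+1) := by positivity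
        linarith
      obtain ⟨t, ht, hts⟩ := exists_lt_of_lt_csSup (Set.Nonempty.image c ⟨x₀, show x₀ ∈ P from hx₀⟩) h1
      obtain ⟨w, hwP, hwt⟩ := ht
      exact ⟨w, hwP, hwt ▸ hts⟩
    choose x hxP hxc using hseq
    by_cases hT : Tendsto (fun k => ‖x k‖) atTop atTop
    · obtain ⟨u, hu1, hfu, hcu⟩ := recession_dir f b c (S - 1) x (fun k => hxP k)
        (fun k => by
          have := hxc k
          have h2 : 1/((k:ℝ)+1) ≤ 1 := by
            rw [div_le_one (by positivity)]; linarith [Nat.cast_nonneg (α := ℝ) k]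
          linarith) hT
      exact reduction u hu1 hfu hcu
    · rw [Filter.tendsto_atTop] at hT
      push_neg at hT
      obtain ⟨M, hM⟩ := hT
      obtain ⟨φ, hφ, hφM⟩ := Filter.extraction_of_frequently_atTop hM
      have hball : ∀ k, x (φ k) ∈ closedBall (0:E) M := by
        intro k
        rw [mem_closedBall_zero_iff]
        exact le_of_lt (hφM k)
      obtain ⟨x', _, ψ, hψ, hconv⟩ := (isCompact_closedBall (0:E) M).tendsto_subseq hball
      have hx'P : x' ∈ P :=
        hPclosed.mem_of_tendsto hconv (Filter.Eventually.of_forall fun k => hxP _)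
      have hcx' : Tendsto (fun k => c (x (φ (ψ k)))) atTop (𝓝 (c x')) :=
        (c.continuous.tendsto x').comp hconv
      have hSle : S ≤ c x' := by
        have hlim : Tendsto (fun k : ℕ => S - 1/((k:ℝ)+1)) atTop (𝓝 S) := by
          have := tendsto_one_div_add_atTop_nhds_zero_nat (𝕜 := ℝ)
          have h2 := tendsto_const_nhds (x := S) (f := atTop (α := ℕ)) |>.sub this
          simpa using h2
        refine le_of_tendsto_of_tendsto' hlim hcx' fun k => ?_
        have h3 : k ≤ φ (ψ k) := le_trans hψ.le_apply hφ.le_apply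
        have h4 : 1/((φ (ψ k):ℝ)+1) ≤ 1/((k:ℝ)+1) := by
          apply one_div_le_one_div_of_le (by positivity)
          have : (k:ℝ) ≤ (φ (ψ k):ℝ) := Nat.cast_le.2 h3
          linarith
        linarith [hxc (φ (ψ k))]
      refine ⟨x', hx'P, fun y hy => ?_⟩
      calc c y ≤ S := le_csSup hbd ⟨y, hy, rfl⟩
        _ ≤ c x' := hSle
  · rw [not_bddAbove_iff] at hbd
    have hseq : ∀ k : ℕ, ∃ x ∈ P, (k:ℝ) < c x := by
      intro k
      obtain ⟨t, ht, hts⟩ := hbd (k:ℝ)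
      obtain ⟨w, hwP, hwt⟩ := ht
      exact ⟨w, hwP, hwt ▸ hts⟩
    choose x hxP hxc using hseq
    by_cases hT : Tendsto (fun k => ‖x k‖) atTop atTop
    · obtain ⟨u, hu1, hfu, hcu⟩ := recession_dir f b c 0 x (fun k => hxP k)
        (fun k => le_of_lt (lt_of_le_of_lt (Nat.cast_nonneg k) (hxc k))) hT
      exact reduction u hu1 hfu hcu
    · exfalso
      rw [Filter.tendsto_atTop] at hT
      push_neg at hT
      obtain ⟨M, hM⟩ := hT
      obtain ⟨φ, hφ, hφM⟩ := Filter.extraction_of_frequently_atTop hM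
      have hball : ∀ k, x (φ k) ∈ closedBall (0:E) M := by
        intro k
        rw [mem_closedBall_zero_iff]
        exact le_of_lt (hφM k)
      obtain ⟨x', _, ψ, hψ, hconv⟩ := (isCompact_closedBall (0:E) M).tendsto_subseq hball
      have hcx' : Tendsto (fun k => c (x (φ (ψ k)))) atTop (𝓝 (c x')) :=
        (c.continuous.tendsto x').comp hconv
      have hatTop : Tendsto (fun k => c (x (φ (ψ k)))) atTop atTop := by
        apply tendsto_atTop_mono _ tendsto_natCast_atTop_atTop
        intro k
        have h3 : k ≤ φ (ψ k) := le_trans hψ.le_apply hφ.le_apply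
        have h4 : ((k:ℝ)) ≤ ((φ (ψ k)):ℝ) := Nat.cast_le.2 h3
        linarith [hxc (φ (ψ k))]
      exact not_tendsto_atTop_of_tendsto_nhds hcx' hatTop

end Attain


open Filter Metric Set Topology

section SecondOrder
variable {E : Type*} [NormedAddCommGroup E] [NormedSpace ℝ E]

/-- Second-order necessary condition along tangent directions: if `g` is C², has zero
derivative at `x`, and `x` maximizes `g` on `S`, then the Hessian is nonpositive along
tangent directions to `S` at `x`. -/
lemma second_order_nonpos {g : E → ℝ} (hg : ContDiff ℝ 2 g) {S : Set E} {x v : E}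
    (hx : x ∈ S) (hv : v ∈ tangentConeAt ℝ S x) (hg0 : fderiv ℝ g x = 0)
    (hle : ∀ y ∈ S, g y ≤ g x) :
    fderiv ℝ (fderiv ℝ g) x v v ≤ 0 := by
  by_contra hpos
  push_neg at hpos
  set F := fderiv ℝ g with hF
  have hF1 : ContDiff ℝ 1 F := hg.fderiv_right (le_refl _)
  have hdg : Differentiable ℝ g := hg.differentiable (by norm_num)
  have hdF : Differentiable ℝ F := hF1.differentiable (by norm_num)
  have hcontF2 : Continuous (fun y => fderiv ℝ F y) := hF1.continuous_fderiv (by norm_num)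
  have hΦ : Continuous (fun p : E × E => fderiv ℝ F p.1 p.2 p.2) := by
    have h1 : Continuous (fun p : E × E => (fderiv ℝ F p.1) p.2) :=
      (hcontF2.comp continuous_fst).clm_apply continuous_snd
    exact h1.clm_apply continuous_snd
  set ε := fderiv ℝ F x v v / 2 with hε
  have hε0 : 0 < ε := by positivity
  have hεlt : ε < fderiv ℝ F x v v := by
    simp only [hε]; linarith
  have hev : ∀ᶠ p : E × E in 𝓝 (x, v), ε < fderiv ℝ F p.1 p.2 p.2 :=
    (hΦ.continuousAt (x := (x, v))).eventually_const_lt hεlt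
  obtain ⟨δ, hδ0, hδ⟩ := Metric.eventually_nhds_iff.1 hev
  obtain ⟨c, d, hc, hmem, hcd⟩ := mem_tangentConeAt_iff_exists_seq_norm_tendsto_atTop.1 hv
  -- d k → 0
  have hcne : ∀ᶠ k in atTop, c k ≠ 0 := by
    filter_upwards [hc.eventually_ge_atTop 1] with k hk
    intro h0; rw [h0, norm_zero] at hk; linarith
  have hd0 : Tendsto (fun k => ‖d k‖) atTop (𝓝 0) := by
    have h1 : Tendsto (fun k => ‖c k‖⁻¹ * ‖c k • d k‖) atTop (𝓝 0) := by
      have := (tendsto_inv_atTop_zero.comp hc).mul hcd.norm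
      simpa using this
    apply h1.congr'
    filter_upwards [hcne] with k hk
    rw [norm_smul, ← mul_assoc, inv_mul_cancel₀ (norm_ne_zero_iff.2 hk), one_mul]
  have hdlt : ∀ᶠ k in atTop, ‖d k‖ < δ := by
    have := hd0.eventually (eventually_lt_nhds hδ0)
    simpa using this
  have hcdlt : ∀ᶠ k in atTop, dist (c k • d k) v < δ :=
    hcd.eventually (Metric.ball_mem_nhds v hδ0)
  obtain ⟨k, hkS, hkd, hkcd⟩ := (hmem.and (hdlt.and hcdlt)).exists
  -- MVT twice on t ↦ g (x + t • d k)
  set dk := d k with hdk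
  have hline : ∀ t : ℝ, HasDerivAt (fun s : ℝ => x + s • dk) dk t := by
    intro t
    have := ((hasDerivAt_id t).smul_const dk).const_add x
    simpa using this
  have hφ : ∀ t : ℝ, HasDerivAt (fun s : ℝ => g (x + s • dk)) (F (x + t • dk) dk) t := by
    intro t
    exact (hdg (x + t • dk)).hasFDerivAt.comp_hasDerivAt t (hline t)
  have hφ' : ∀ t : ℝ, HasDerivAt (fun s : ℝ => F (x + s • dk) dk)
      (fderiv ℝ F (x + t • dk) dk dk) t := by
    intro t
    have h1 : HasDerivAt (fun s : ℝ => F (x + s • dk)) (fderiv ℝ F (x + t • dk) dk) t :=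
      (hdF (x + t • dk)).hasFDerivAt.comp_hasDerivAt t (hline t)
    have := h1.clm_apply (hasDerivAt_const t dk)
    simpa using this
  have hlinecont : Continuous (fun s : ℝ => x + s • dk) :=
    continuous_const.add (continuous_id.smul continuous_const)
  have hφcont : ContinuousOn (fun s : ℝ => g (x + s • dk)) (Set.Icc 0 1) :=
    (hg.continuous.comp hlinecont).continuousOn
  obtain ⟨θ₁, hθ₁, hθ₁eq⟩ := exists_hasDerivAt_eq_slope (fun s : ℝ => g (x + s • dk))
    (fun t => F (x + t • dk) dk) zero_lt_one hφcont (fun t _ => hφ t)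
  have hφ'0 : F (x + (0:ℝ) • dk) dk = 0 := by
    rw [zero_smul, add_zero, show F x = 0 from hg0]
    simp
  have hφ'θ₁ : F (x + θ₁ • dk) dk ≤ 0 := by
    rw [hθ₁eq]
    have h1 : g (x + (1:ℝ) • dk) ≤ g (x + (0:ℝ) • dk) := by
      simp only [one_smul, zero_smul, add_zero]
      exact hle _ hkS
    have : g (x + (1:ℝ) • dk) - g (x + (0:ℝ) • dk) ≤ 0 := by linarith
    apply div_nonpos_of_nonpos_of_nonneg this
    norm_num
  have hφ'cont : ContinuousOn (fun t : ℝ => F (x + t • dk) dk) (Set.Icc 0 θ₁) := by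
    apply Continuous.continuousOn
    exact (hF1.continuous.comp hlinecont).clm_apply continuous_const
  obtain ⟨θ₂, hθ₂, hθ₂eq⟩ := exists_hasDerivAt_eq_slope (fun t : ℝ => F (x + t • dk) dk)
    (fun t => fderiv ℝ F (x + t • dk) dk dk) hθ₁.1 hφ'cont (fun t _ => hφ' t)
  have hhess : fderiv ℝ F (x + θ₂ • dk) dk dk ≤ 0 := by
    rw [hθ₂eq, hφ'0, sub_zero, sub_zero]
    exact div_nonpos_of_nonpos_of_nonneg hφ'θ₁ (le_of_lt hθ₁.1)
  -- contradiction with the continuity bound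
  have hp : dist ((x + θ₂ • dk, c k • dk) : E × E) (x, v) < δ := by
    rw [Prod.dist_eq]
    apply max_lt _ hkcd
    rw [dist_eq_norm, add_sub_cancel_left, norm_smul, Real.norm_eq_abs,
      abs_of_pos hθ₂.1]
    calc θ₂ * ‖dk‖ ≤ 1 * ‖dk‖ := by
          apply mul_le_mul_of_nonneg_right _ (norm_nonneg _)
          exact le_of_lt (lt_trans hθ₂.2 hθ₁.2)
      _ = ‖dk‖ := one_mul _
      _ < δ := hkd
  have h2 := hδ hp
  have h3 : fderiv ℝ F (x + θ₂ • dk) (c k • dk) (c k • dk)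
      = c k * (c k * fderiv ℝ F (x + θ₂ • dk) dk dk) := by
    simp only [map_smul, ContinuousLinearMap.smul_apply, smul_eq_mul]
  rw [h3] at h2
  nlinarith [sq_nonneg (c k)]

end SecondOrder


section Tangent

open Filter Metric Set Topology

lemma farkas_fintype' {E : Type*} [NormedAddCommGroup E] [NormedSpace ℝ E]
    {ι : Type*} [Fintype ι] (f : ι → E →L[ℝ] ℝ) (ξ : E →L[ℝ] ℝ)
    (h : ∀ u : E, (∀ i, f i u ≤ 0) → ξ u ≤ 0) :
    ∃ μ : ι → ℝ, (∀ i, 0 ≤ μ i) ∧ ξ = ∑ i, μ i • f i := by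
  classical
  set e := Fintype.equivFin ι with he
  obtain ⟨μ, hμ0, hμ⟩ := farkas_fin (Fintype.card ι) (fun j => f (e.symm j)) ξ
    (fun u hu => h u (fun i => by
      have h2 := hu (e i)
      simpa using h2))
  refine ⟨fun i => μ (e i), fun i => hμ0 _, ?_⟩
  rw [hμ, ← Equiv.sum_comp e (fun j => μ j • f (e.symm j))]
  exact Finset.sum_congr rfl fun i _ => by simp

/-- Under metric subregularity, linearized directions are tangent to Γ. -/
lemma tlin_sub_tangent (n l₁ l₂ : ℕ) (q : Fin (l₁+l₂) → En n → ℝ)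
    (hq : ∀ i, ContDiff ℝ 2 (q i)) (κ : ℝ) (U : Set (En n))
    (hsub : ∀ y ∈ U, Metric.infDist y (Gam n l₁ l₂ q) ≤
      κ * ((∑ i ∈ Finset.univ.filter (fun i : Fin (l₁ + l₂) => (i : ℕ) < l₁), |q i y|) +
        ∑ i ∈ Finset.univ.filter (fun i : Fin (l₁ + l₂) => l₁ ≤ (i : ℕ)), max (q i y) 0))
    (x : En n) (hxU : U ∈ 𝓝 x) (hx : x ∈ Gam n l₁ l₂ q) (u : En n)
    (hE : ∀ i : Fin (l₁+l₂), (i:ℕ) < l₁ → fderiv ℝ (q i) x u = 0)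
    (hI : ∀ i : Fin (l₁+l₂), l₁ ≤ (i:ℕ) → q i x = 0 → fderiv ℝ (q i) x u ≤ 0) :
    u ∈ tangentConeAt ℝ (Gam n l₁ l₂ q) x := by
  classical
  have hxfeas : Feas n l₁ l₂ q x := hx
  have hlinecont : Continuous (fun t : ℝ => x + t • u) :=
    continuous_const.add (continuous_id.smul continuous_const)
  have hder : ∀ i, HasDerivAt (fun t : ℝ => q i (x + t • u)) (fderiv ℝ (q i) x u) 0 := by
    intro i
    have hline : HasDerivAt (fun t : ℝ => x + t • u) u 0 := by
      simpa using ((hasDerivAt_id (0:ℝ)).smul_const u).const_add x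
    have h2 := (((hq i).differentiable (by norm_num)) (x + (0:ℝ) • u)
      ).hasFDerivAt.comp_hasDerivAt 0 hline
    simp only [zero_smul, add_zero] at h2
    exact h2
  have hslope : ∀ i, q i x = 0 → Tendsto (fun t : ℝ => q i (x + t • u) / t)
      (𝓝[>] (0:ℝ)) (𝓝 (fderiv ℝ (q i) x u)) := by
    intro i hqi
    have h1 := hasDerivAt_iff_tendsto_slope.1 (hder i)
    have h2 : Tendsto (slope (fun t : ℝ => q i (x + t • u)) 0) (𝓝[>] (0:ℝ))
        (𝓝 (fderiv ℝ (q i) x u)) :=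
      h1.mono_left (nhdsWithin_mono 0 (fun t ht => ne_of_gt ht))
    apply h2.congr
    intro t
    rw [slope_def_field]
    simp [hqi]
  have hterm1 : ∀ i : Fin (l₁+l₂), (i:ℕ) < l₁ →
      Tendsto (fun t : ℝ => |q i (x + t • u)| / t) (𝓝[>] (0:ℝ)) (𝓝 0) := by
    intro i hi
    have hqi0 : q i x = 0 := (hxfeas i).1 hi
    have h := (hslope i hqi0).abs
    rw [hE i hi, abs_zero] at h
    apply h.congr'
    filter_upwards [self_mem_nhdsWithin] with t ht
    rw [abs_div, abs_of_pos (show (0:ℝ) < t from ht)]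
  have hterm2 : ∀ i : Fin (l₁+l₂), l₁ ≤ (i:ℕ) →
      Tendsto (fun t : ℝ => max (q i (x + t • u)) 0 / t) (𝓝[>] (0:ℝ)) (𝓝 0) := by
    intro i hi
    by_cases h0 : q i x = 0
    · have hD : fderiv ℝ (q i) x u ≤ 0 := hI i hi h0
      have h := (hslope i h0).max (tendsto_const_nhds (x := (0:ℝ)))
      rw [max_eq_right hD] at h
      apply h.congr'
      filter_upwards [self_mem_nhdsWithin] with t ht
      rw [show (0:ℝ) = 0 / t by rw [zero_div], max_div_div_right (le_of_lt ht)]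
      rw [zero_div]
    · have hlt : q i x < 0 := lt_of_le_of_ne ((hxfeas i).2 hi) h0
      have hcont : Tendsto (fun t : ℝ => q i (x + t • u)) (𝓝[>] (0:ℝ)) (𝓝 (q i x)) := by
        have h1 := ((hq i).continuous.comp hlinecont).tendsto 0
        simp only [Function.comp, zero_smul, add_zero] at h1
        exact h1.mono_left nhdsWithin_le_nhds
      have hev : ∀ᶠ t in 𝓝[>] (0:ℝ), q i (x + t • u) < 0 :=
        hcont.eventually (eventually_lt_nhds hlt)
      apply tendsto_const_nhds.congr'
      filter_upwards [hev] with t ht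
      rw [max_eq_right (le_of_lt ht), zero_div]
  set R : ℝ → ℝ := fun t =>
    (∑ i ∈ Finset.univ.filter (fun i : Fin (l₁ + l₂) => (i : ℕ) < l₁), |q i (x + t • u)|) +
      ∑ i ∈ Finset.univ.filter (fun i : Fin (l₁ + l₂) => l₁ ≤ (i : ℕ)),
        max (q i (x + t • u)) 0 with hR
  have hRlim : Tendsto (fun t => R t / t) (𝓝[>] (0:ℝ)) (𝓝 0) := by
    have hsum1 : Tendsto (fun t : ℝ =>
        ∑ i ∈ Finset.univ.filter (fun i : Fin (l₁ + l₂) => (i : ℕ) < l₁),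
          |q i (x + t • u)| / t) (𝓝[>] (0:ℝ)) (𝓝 0) := by
      have := tendsto_finset_sum
        (Finset.univ.filter (fun i : Fin (l₁ + l₂) => (i : ℕ) < l₁))
        (fun i hi => hterm1 i (by simpa using (Finset.mem_filter.1 hi).2))
      simpa using this
    have hsum2 : Tendsto (fun t : ℝ =>
        ∑ i ∈ Finset.univ.filter (fun i : Fin (l₁ + l₂) => l₁ ≤ (i : ℕ)),
          max (q i (x + t • u)) 0 / t) (𝓝[>] (0:ℝ)) (𝓝 0) := by
      have := tendsto_finset_sum
        (Finset.univ.filter (fun i : Fin (l₁ + l₂) => l₁ ≤ (i : ℕ)))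
        (fun i hi => hterm2 i (by simpa using (Finset.mem_filter.1 hi).2))
      simpa using this
    have := hsum1.add hsum2
    rw [add_zero] at this
    apply this.congr
    intro t
    rw [hR, add_div, Finset.sum_div, Finset.sum_div]
  have hmemU : ∀ᶠ t in 𝓝[>] (0:ℝ), x + t • u ∈ U := by
    have h1 : Tendsto (fun t : ℝ => x + t • u) (𝓝[>] (0:ℝ)) (𝓝 x) := by
      have h2 := hlinecont.tendsto 0
      simp only [zero_smul, add_zero] at h2
      exact h2.mono_left nhdsWithin_le_nhds
    exact h1.eventually_mem hxU
  have hinf : Tendsto (fun t : ℝ => Metric.infDist (x + t • u) (Gam n l₁ l₂ q) / t)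
      (𝓝[>] (0:ℝ)) (𝓝 0) := by
    have hlow : ∀ᶠ t in 𝓝[>] (0:ℝ),
        0 ≤ Metric.infDist (x + t • u) (Gam n l₁ l₂ q) / t := by
      filter_upwards [self_mem_nhdsWithin] with t ht
      exact div_nonneg Metric.infDist_nonneg (le_of_lt ht)
    have hup : ∀ᶠ t in 𝓝[>] (0:ℝ),
        Metric.infDist (x + t • u) (Gam n l₁ l₂ q) / t ≤ κ * R t / t := by
      filter_upwards [hmemU, self_mem_nhdsWithin] with t htU ht
      exact div_le_div_of_nonneg_right (hsub _ htU) (le_of_lt ht)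
    have hgl : Tendsto (fun t => κ * R t / t) (𝓝[>] (0:ℝ)) (𝓝 0) := by
      have := hRlim.const_mul κ
      rw [mul_zero] at this
      apply this.congr
      intro t
      ring
    exact squeeze_zero' hlow hup hgl
  -- build the sequence witnessing tangency
  have hΓne : (Gam n l₁ l₂ q).Nonempty := ⟨x, hx⟩
  have hseq : ∀ k : ℕ, ∃ t : ℝ, 0 < t ∧ t < 1/((k:ℝ)+1) ∧
      Metric.infDist (x + t • u) (Gam n l₁ l₂ q) < t * (1/((k:ℝ)+1)) := by
    intro k
    have hpos : (0:ℝ) < 1/((k:ℝ)+1) := by positivity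
    have h1 : ∀ᶠ t in 𝓝[>] (0:ℝ),
        Metric.infDist (x + t • u) (Gam n l₁ l₂ q) / t < 1/((k:ℝ)+1) :=
      hinf.eventually (eventually_lt_nhds hpos)
    have h2 : ∀ᶠ t in 𝓝[>] (0:ℝ), t < 1/((k:ℝ)+1) :=
      eventually_nhdsWithin_of_eventually_nhds (eventually_lt_nhds hpos)
    obtain ⟨t, ⟨⟨h1t, h2t⟩, h3t⟩⟩ := ((h1.and h2).and self_mem_nhdsWithin).exists
    refine ⟨t, h3t, h2t, ?_⟩
    rw [div_lt_iff₀ h3t] at h1t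
    linarith [h1t]
  choose t ht0 htle htinf using hseq
  have hy : ∀ k : ℕ, ∃ y ∈ Gam n l₁ l₂ q,
      dist (x + t k • u) y < t k * (1/((k:ℝ)+1)) :=
    fun k => (Metric.infDist_lt_iff hΓne).1 (htinf k)
  choose y hyΓ hyd using hy
  refine mem_tangentConeAt_iff_exists_seq_norm_tendsto_atTop.2
    ⟨fun k => (t k)⁻¹, fun k => y k - x, ?_, ?_, ?_⟩
  swap
  · filter_upwards with k
    have he : x + (y k - x) = y k := by abel
    rw [he]
    exact hyΓ k
  · have hmono : ∀ k : ℕ, (k:ℝ)+1 ≤ ‖(t k)⁻¹‖ := by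
      intro k
      rw [Real.norm_eq_abs, abs_of_pos (inv_pos.2 (ht0 k))]
      have hlt := htle k
      rw [lt_div_iff₀ (by positivity : (0:ℝ) < (k:ℝ)+1)] at hlt
      have h3 : ((k:ℝ)+1) * t k ≤ (t k)⁻¹ * t k := by
        rw [inv_mul_cancel₀ (ne_of_gt (ht0 k))]
        nlinarith
      exact le_of_mul_le_mul_right h3 (ht0 k)
    exact tendsto_atTop_mono hmono (tendsto_atTop_add_const_right atTop 1
      tendsto_natCast_atTop_atTop)
  · have hbound : ∀ k : ℕ, ‖(t k)⁻¹ • (y k - x) - u‖ ≤ 1/((k:ℝ)+1) := by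
      intro k
      have h1 : (t k)⁻¹ • (y k - x) - u = (t k)⁻¹ • (y k - (x + t k • u)) := by
        rw [smul_sub, smul_sub]
        rw [smul_add, inv_smul_smul₀ (ne_of_gt (ht0 k))]
        abel
      rw [h1, norm_smul, Real.norm_eq_abs, abs_of_pos (inv_pos.2 (ht0 k))]
      have h2 : ‖y k - (x + t k • u)‖ ≤ t k * (1/((k:ℝ)+1)) := by
        rw [← dist_eq_norm, dist_comm]
        exact le_of_lt (hyd k)
      calc (t k)⁻¹ * ‖y k - (x + t k • u)‖ ≤ (t k)⁻¹ * (t k * (1/((k:ℝ)+1))) := by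
            apply mul_le_mul_of_nonneg_left h2 (le_of_lt (inv_pos.2 (ht0 k)))
        _ = 1/((k:ℝ)+1) := by
            rw [← mul_assoc, inv_mul_cancel₀ (ne_of_gt (ht0 k)), one_mul]
    rw [tendsto_iff_norm_sub_tendsto_zero]
    apply squeeze_zero (fun k => norm_nonneg _) hbound
    exact tendsto_one_div_add_atTop_nhds_zero_nat

end Tangent


section QuadF

open Filter Metric Set Topology

lemma euclid_proj_apply {m : ℕ} (i : Fin m) (w : EuclideanSpace ℝ (Fin m)) :
    (EuclideanSpace.proj i) w = w i := rfl

lemma quadF_nonpos (n l₁ l₂ : ℕ) (q : Fin (l₁+l₂) → En n → ℝ)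
    (hq : ∀ i, ContDiff ℝ 2 (q i)) (x : En n) (hx : x ∈ Gam n l₁ l₂ q) (v : En n)
    (hv : v ∈ tangentConeAt ℝ (Gam n l₁ l₂ q) x) (lam : En (l₁+l₂))
    (hlam : lam ∈ NTheta n l₁ l₂ q x) (hgrad : gradSum n l₁ l₂ q x lam = 0) :
    quadF n l₁ l₂ q x v lam ≤ 0 := by
  classical
  have hxfeas : Feas n l₁ l₂ q x := hx
  set g : En n → ℝ := fun y => ∑ i, lam i * q i y with hgdef
  have hg2 : ContDiff ℝ 2 g := ContDiff.sum fun i _ => contDiff_const.mul (hq i)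
  have hDg : ∀ y, HasFDerivAt g (∑ i, lam i • fderiv ℝ (q i) y) y := by
    intro y
    exact HasFDerivAt.fun_sum fun i _ =>
      ((((hq i).differentiable (by norm_num)) y).hasFDerivAt).const_mul (lam i)
  have hg0 : fderiv ℝ g x = 0 := by
    rw [(hDg x).fderiv]
    exact hgrad
  have hgx : g x = 0 := by
    apply Finset.sum_eq_zero
    intro i _
    by_cases hi : (i:ℕ) < l₁
    · rw [(hxfeas i).1 hi, mul_zero]
    · rcases hlam i (Nat.le_of_not_lt hi) with ⟨h1, h2⟩
      by_cases hqi : q i x = 0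
      · rw [hqi, mul_zero]
      · rw [h2 hqi, zero_mul]
  have hle : ∀ y ∈ Gam n l₁ l₂ q, g y ≤ g x := by
    intro y hy
    have hyfeas : Feas n l₁ l₂ q y := hy
    rw [hgx]
    apply Finset.sum_nonpos
    intro i _
    by_cases hi : (i:ℕ) < l₁
    · rw [(hyfeas i).1 hi, mul_zero]
    · exact mul_nonpos_of_nonneg_of_nonpos (hlam i (Nat.le_of_not_lt hi)).1
        ((hyfeas i).2 (Nat.le_of_not_lt hi))
  have hkey := second_order_nonpos hg2 hx hv hg0 hle
  have hFeq : fderiv ℝ g = fun y => ∑ i, lam i • fderiv ℝ (q i) y :=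
    funext fun y => (hDg y).fderiv
  have hD2 : HasFDerivAt (fun y => ∑ i, lam i • fderiv ℝ (q i) y)
      (∑ i, lam i • fderiv ℝ (fderiv ℝ (q i)) x) x := by
    apply HasFDerivAt.fun_sum
    intro i _
    have hdiff : DifferentiableAt ℝ (fderiv ℝ (q i)) x :=
      (((hq i).fderiv_right (m := 1) (le_refl _)).differentiable (by norm_num)) x
    exact hdiff.hasFDerivAt.const_smul (lam i)
  have heq2 : fderiv ℝ (fderiv ℝ g) x = ∑ i, lam i • fderiv ℝ (fderiv ℝ (q i)) x := by
    rw [hFeq]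
    exact hD2.fderiv
  rw [heq2] at hkey
  have heq3 : quadF n l₁ l₂ q x v lam
      = (∑ i, lam i • fderiv ℝ (fderiv ℝ (q i)) x) v v := by
    simp only [ContinuousLinearMap.sum_apply, ContinuousLinearMap.smul_apply, smul_eq_mul]
    rfl
  rw [heq3]
  exact hkey

end QuadF

/-- under MSCQ, for x near x̄, x* ∈ N̂_Γ(x) and any critical direction
v ∈ K(x,x*), the directional multiplier set Λ(x,x*;v) is nonempty. -/
theorem stmt11 (n l₁ l₂ : ℕ) (q : Fin (l₁ + l₂) → En n → ℝ) (xb : En n)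
    (hq : ∀ i, ContDiff ℝ 2 (q i)) (hfeas : Feas n l₁ l₂ q xb)
    (hmscq : MSCQ n l₁ l₂ q xb) :
    ∃ U ∈ 𝓝 xb, ∀ x ∈ U, x ∈ Gam n l₁ l₂ q →
      ∀ ξ ∈ NhatF n l₁ l₂ q x, ∀ v ∈ Kcone n l₁ l₂ q x ξ,
        (LamDir n l₁ l₂ q x ξ v).Nonempty := by
  classical
  obtain ⟨κ, hκ, U, hU, hsub⟩ := hmscq
  obtain ⟨r, hr, hball⟩ := Metric.mem_nhds_iff.1 hU
  refine ⟨Metric.ball xb r, Metric.ball_mem_nhds xb hr, ?_⟩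
  intro x hxball hxΓ ξ hξ v hv
  have hUx : U ∈ 𝓝 x :=
    Filter.mem_of_superset (Metric.isOpen_ball.mem_nhds hxball) hball
  have htan : ∀ w : En n, (∀ i : Fin (l₁+l₂), (i:ℕ) < l₁ → fderiv ℝ (q i) x w = 0) →
      (∀ i : Fin (l₁+l₂), l₁ ≤ (i:ℕ) → q i x = 0 → fderiv ℝ (q i) x w ≤ 0) →
      w ∈ tangentConeAt ℝ (Gam n l₁ l₂ q) x :=
    fun w h1 h2 => tlin_sub_tangent n l₁ l₂ q hq κ U hsub x hUx hxΓ w h1 h2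
  -- Step 1: multiplier existence via Farkas' lemma
  set F0 : (Fin (l₁+l₂) ⊕ Fin (l₁+l₂)) → (En n →L[ℝ] ℝ) :=
    Sum.elim (fun i => if ((i:ℕ) < l₁ ∨ q i x = 0) then fderiv ℝ (q i) x else 0)
      (fun i => if (i:ℕ) < l₁ then -(fderiv ℝ (q i) x) else 0) with hF0
  have hF0inl : ∀ i, F0 (Sum.inl i)
      = (if ((i:ℕ) < l₁ ∨ q i x = 0) then fderiv ℝ (q i) x else 0) := fun i => rfl
  have hF0inr : ∀ i, F0 (Sum.inr i)
      = (if (i:ℕ) < l₁ then -(fderiv ℝ (q i) x) else 0) := fun i => rfl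
  have hFh : ∀ w : En n, (∀ j, F0 j w ≤ 0) → ξ w ≤ 0 := by
    intro w hw
    apply hξ w
    apply htan w
    · intro i hi
      have h1 := hw (Sum.inl i)
      have h2 := hw (Sum.inr i)
      rw [hF0inl i, if_pos (Or.inl hi)] at h1
      rw [hF0inr i, if_pos hi] at h2
      rw [ContinuousLinearMap.neg_apply] at h2
      linarith
    · intro i hi hqi
      have h1 := hw (Sum.inl i)
      rw [hF0inl i, if_pos (Or.inr hqi)] at h1
      exact h1
  obtain ⟨μ, hμ0, hμ⟩ := farkas_fintype' F0 ξ hFh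
  set lam : En (l₁+l₂) := WithLp.toLp 2 (fun i => (if ((i:ℕ) < l₁ ∨ q i x = 0) then μ (Sum.inl i) else 0)
      - (if (i:ℕ) < l₁ then μ (Sum.inr i) else 0)) with hlamdef
  have hlamapp : ∀ i, lam i = (if ((i:ℕ) < l₁ ∨ q i x = 0) then μ (Sum.inl i) else 0)
      - (if (i:ℕ) < l₁ then μ (Sum.inr i) else 0) := fun i => rfl
  have hlamN : lam ∈ NTheta n l₁ l₂ q x := by
    intro i hi
    have hnlt : ¬ ((i:ℕ) < l₁) := Nat.not_lt.2 hi
    constructor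
    · rw [hlamapp i, if_neg hnlt, sub_zero]
      by_cases hqi : q i x = 0
      · rw [if_pos (Or.inr hqi)]
        exact hμ0 _
      · rw [if_neg (by tauto)]
    · intro hqi
      rw [hlamapp i, if_neg (by tauto), if_neg hnlt, sub_zero]
  have hlamG : gradSum n l₁ l₂ q x lam = ξ := by
    rw [hμ]
    show (∑ i, lam i • fderiv ℝ (q i) x) = ∑ j, μ j • F0 j
    rw [Fintype.sum_sum_type (fun j => μ j • F0 j), ← Finset.sum_add_distrib]
    apply Finset.sum_congr rfl
    intro i _
    rw [hlamapp i, hF0inl i, hF0inr i]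
    by_cases hcase : ((i:ℕ) < l₁ ∨ q i x = 0)
    · rw [if_pos hcase, if_pos hcase]
      by_cases hi : (i:ℕ) < l₁
      · rw [if_pos hi, if_pos hi, sub_smul, smul_neg, sub_eq_add_neg]
      · rw [if_neg hi, if_neg hi, sub_zero, smul_zero, add_zero]
    · rw [if_neg hcase, if_neg hcase]
      have hi : ¬ ((i:ℕ) < l₁) := fun h => hcase (Or.inl h)
      rw [if_neg hi, if_neg hi]
      simp
  -- Step 2: linear programming data
  set e1 : Fin n → En n := fun j => EuclideanSpace.single j (1:ℝ) with he1
  set G : Fin n → (En (l₁+l₂) →L[ℝ] ℝ) :=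
    fun j => ∑ i, (fderiv ℝ (q i) x (e1 j)) • EuclideanSpace.proj i with hGdef
  have hG : ∀ j w, G j w = gradSum n l₁ l₂ q x w (e1 j) := by
    intro j w
    show (∑ i, (fderiv ℝ (q i) x (e1 j)) • EuclideanSpace.proj i) w
      = (∑ i, w i • fderiv ℝ (q i) x) (e1 j)
    rw [ContinuousLinearMap.sum_apply, ContinuousLinearMap.sum_apply]
    apply Finset.sum_congr rfl
    intro i _
    rw [ContinuousLinearMap.smul_apply, ContinuousLinearMap.smul_apply,
      smul_eq_mul, smul_eq_mul, euclid_proj_apply]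
    ring
  set cq : En (l₁+l₂) →L[ℝ] ℝ :=
    ∑ i, (hessQ n l₁ l₂ q i x v v) • EuclideanSpace.proj i with hcqdef
  have hcq : ∀ w, cq w = quadF n l₁ l₂ q x v w := by
    intro w
    show (∑ i, (hessQ n l₁ l₂ q i x v v) • EuclideanSpace.proj i) w
      = ∑ i, w i * hessQ n l₁ l₂ q i x v v
    rw [ContinuousLinearMap.sum_apply]
    apply Finset.sum_congr rfl
    intro i _
    rw [ContinuousLinearMap.smul_apply, smul_eq_mul, euclid_proj_apply]
    ring
  set f1 : ((Fin n ⊕ Fin n) ⊕ (Fin (l₁+l₂) ⊕ Fin (l₁+l₂))) → (En (l₁+l₂) →L[ℝ] ℝ) :=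
    Sum.elim (Sum.elim G (fun j => -(G j)))
      (Sum.elim (fun i => if l₁ ≤ (i:ℕ) then -(EuclideanSpace.proj i) else 0)
        (fun i => if (l₁ ≤ (i:ℕ) ∧ q i x ≠ 0) then
          (EuclideanSpace.proj i : En (l₁+l₂) →L[ℝ] ℝ) else 0)) with hf1
  set b1 : ((Fin n ⊕ Fin n) ⊕ (Fin (l₁+l₂) ⊕ Fin (l₁+l₂))) → ℝ :=
    Sum.elim (Sum.elim (fun j => ξ (e1 j)) (fun j => -(ξ (e1 j)))) (fun _ => 0) with hb1
  -- equality of continuous linear maps from coordinatewise data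
  have hext : ∀ (T₁ T₂ : En n →L[ℝ] ℝ), (∀ j, T₁ (e1 j) = T₂ (e1 j)) → T₁ = T₂ := by
    intro T₁ T₂ hj
    apply ContinuousLinearMap.coe_injective
    apply Basis.ext (EuclideanSpace.basisFun (Fin n) ℝ).toBasis
    intro j
    have : (EuclideanSpace.basisFun (Fin n) ℝ).toBasis j = e1 j := by
      rw [OrthonormalBasis.coe_toBasis, EuclideanSpace.basisFun_apply, he1]
    rw [this]
    exact hj j
  have hPiff : ∀ w, (∀ j, f1 j w ≤ b1 j) ↔ w ∈ LamSet n l₁ l₂ q x ξ := by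
    intro w
    constructor
    · intro hw
      constructor
      · intro i hi
        constructor
        · have h1 := hw (Sum.inr (Sum.inl i))
          rw [show f1 (Sum.inr (Sum.inl i))
              = (if l₁ ≤ (i:ℕ) then -(EuclideanSpace.proj i) else 0) from rfl,
            if_pos hi] at h1
          rw [show b1 (Sum.inr (Sum.inl i)) = 0 from rfl] at h1
          rw [ContinuousLinearMap.neg_apply, euclid_proj_apply] at h1
          linarith
        · intro hqi
          have h1 := hw (Sum.inr (Sum.inl i))
          have h2 := hw (Sum.inr (Sum.inr i))
          rw [show f1 (Sum.inr (Sum.inl i))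
              = (if l₁ ≤ (i:ℕ) then -(EuclideanSpace.proj i) else 0) from rfl,
            if_pos hi] at h1
          rw [show b1 (Sum.inr (Sum.inl i)) = 0 from rfl] at h1
          rw [ContinuousLinearMap.neg_apply, euclid_proj_apply] at h1
          rw [show f1 (Sum.inr (Sum.inr i))
              = (if (l₁ ≤ (i:ℕ) ∧ q i x ≠ 0) then
                (EuclideanSpace.proj i : En (l₁+l₂) →L[ℝ] ℝ) else 0) from rfl,
            if_pos ⟨hi, hqi⟩] at h2
          rw [show b1 (Sum.inr (Sum.inr i)) = 0 from rfl] at h2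
          rw [euclid_proj_apply] at h2
          linarith
      · apply hext
        intro j
        have h1 := hw (Sum.inl (Sum.inl j))
        have h2 := hw (Sum.inl (Sum.inr j))
        rw [show f1 (Sum.inl (Sum.inl j)) = G j from rfl,
          show b1 (Sum.inl (Sum.inl j)) = ξ (e1 j) from rfl] at h1
        rw [show f1 (Sum.inl (Sum.inr j)) = -(G j) from rfl,
          show b1 (Sum.inl (Sum.inr j)) = -(ξ (e1 j)) from rfl,
          ContinuousLinearMap.neg_apply] at h2
        rw [hG j w] at h1 h2
        linarith
    · rintro ⟨hN, hgr⟩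
      intro j
      rcases j with (j | j) | (i | i)
      · rw [show f1 (Sum.inl (Sum.inl j)) = G j from rfl,
          show b1 (Sum.inl (Sum.inl j)) = ξ (e1 j) from rfl, hG j w, hgr]
      · rw [show f1 (Sum.inl (Sum.inr j)) = -(G j) from rfl,
          show b1 (Sum.inl (Sum.inr j)) = -(ξ (e1 j)) from rfl,
          ContinuousLinearMap.neg_apply, hG j w, hgr]
      · rw [show f1 (Sum.inr (Sum.inl i))
            = (if l₁ ≤ (i:ℕ) then -(EuclideanSpace.proj i) else 0) from rfl,
          show b1 (Sum.inr (Sum.inl i)) = 0 from rfl]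
        by_cases hi : l₁ ≤ (i:ℕ)
        · rw [if_pos hi, ContinuousLinearMap.neg_apply, euclid_proj_apply]
          linarith [(hN i hi).1]
        · rw [if_neg hi]
          exact le_refl _
      · rw [show f1 (Sum.inr (Sum.inr i))
            = (if (l₁ ≤ (i:ℕ) ∧ q i x ≠ 0) then
              (EuclideanSpace.proj i : En (l₁+l₂) →L[ℝ] ℝ) else 0) from rfl,
          show b1 (Sum.inr (Sum.inr i)) = 0 from rfl]
        by_cases hi : (l₁ ≤ (i:ℕ) ∧ q i x ≠ 0)
        · rw [if_pos hi, euclid_proj_apply, (hN i hi.1).2 hi.2]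
        · rw [if_neg hi]
          exact le_refl _
  have H1 : ∀ w, (∀ j, f1 j w ≤ 0) → cq w ≤ 0 := by
    intro w hw
    have hN : w ∈ NTheta n l₁ l₂ q x := by
      intro i hi
      constructor
      · have h1 := hw (Sum.inr (Sum.inl i))
        rw [show f1 (Sum.inr (Sum.inl i))
            = (if l₁ ≤ (i:ℕ) then -(EuclideanSpace.proj i) else 0) from rfl,
          if_pos hi, ContinuousLinearMap.neg_apply, euclid_proj_apply] at h1
        linarith
      · intro hqi
        have h1 := hw (Sum.inr (Sum.inl i))
        have h2 := hw (Sum.inr (Sum.inr i))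
        rw [show f1 (Sum.inr (Sum.inl i))
            = (if l₁ ≤ (i:ℕ) then -(EuclideanSpace.proj i) else 0) from rfl,
          if_pos hi, ContinuousLinearMap.neg_apply, euclid_proj_apply] at h1
        rw [show f1 (Sum.inr (Sum.inr i))
            = (if (l₁ ≤ (i:ℕ) ∧ q i x ≠ 0) then
              (EuclideanSpace.proj i : En (l₁+l₂) →L[ℝ] ℝ) else 0) from rfl,
          if_pos ⟨hi, hqi⟩, euclid_proj_apply] at h2
        linarith
    have hgr : gradSum n l₁ l₂ q x w = 0 := by
      apply hext
      intro j
      have h1 := hw (Sum.inl (Sum.inl j))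
      have h2 := hw (Sum.inl (Sum.inr j))
      rw [show f1 (Sum.inl (Sum.inl j)) = G j from rfl] at h1
      rw [show f1 (Sum.inl (Sum.inr j)) = -(G j) from rfl,
        ContinuousLinearMap.neg_apply] at h2
      rw [hG j w] at h1 h2
      rw [ContinuousLinearMap.zero_apply]
      linarith
    rw [hcq w]
    exact quadF_nonpos n l₁ l₂ q hq x hxΓ v hv.1 w hN hgr
  obtain ⟨lams, hlamsP, hlamsmax⟩ := lp_attain (Module.finrank ℝ (En (l₁+l₂)))
    (En (l₁+l₂)) rfl f1 b1 cq ⟨lam, (hPiff lam).2 ⟨hlamN, hlamG⟩⟩ H1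
  refine ⟨lams, (hPiff lams).1 hlamsP, ?_⟩
  intro w hw
  have := hlamsmax w ((hPiff w).2 hw)
  rw [hcq w, hcq lams] at this
  exact this
end
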